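/- arXiv:2008.00255 — 2 statements merged into one kernel-verified Lean document; each statement's English description precedes it below -/
import Mathlib

section
/- Let θ be an antimorphic involution and u, v ∈ Σ+ with uv = θ(v)u. Then there exist a θ-palindrome x ∈ Σ* and a θ-palindrome y ∈ Σ+ and i ≥ 0 such that u = x(yx)^i and v = yx; in particular u is a θ-palindrome. -/
variable {α : Type*}

/-- θ is an antimorphic involution on Σ* : θ(uv) = θ(v)θ(u) and θ² = id. -/
def IsAntimorphicInvolution (θ : List α → List α) : Prop :=
  (∀ u v : List α, θ (u ++ v) = θ v ++ θ u) ∧ ∀ u : List α, θ (θ u) = u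

/-- The set of θ-conjugates of w: C_θ(w) = { θ(v) ++ u : w = u ++ v }. -/
def thetaConjugates (θ : List α → List α) (w : List α) : Set (List α) :=
  {x | ∃ u v : List α, w = u ++ v ∧ x = θ v ++ u}

/-- n-fold concatenation power of a word. -/
def listPow (z : List α) (n : ℕ) : List α := (List.replicate n z).flatten

/-- A word is primitive if it is not a proper power. -/
def Primitive (z : List α) : Prop :=
  z ≠ [] ∧ ∀ (t : List α) (k : ℕ), z = listPow t k → k = 1

/-- The conjugacy class of w: { v ++ u : w = u ++ v }. -/
def conjClass (w : List α) : Set (List α) := {x | ∃ u v : List α, w = u ++ v ∧ x = v ++ u}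

lemma aux_nil {θ : List α → List α} (hθ : IsAntimorphicInvolution θ) : θ [] = [] := by
  have h := hθ.1 [] []
  simp at h
  have := congrArg List.length h
  simp at this
  exact this

lemma aux_single {θ : List α → List α} (hθ : IsAntimorphicInvolution θ) (a : α) :
    (θ [a]).length = 1 := by
  have hne : ∀ b : α, θ [b] ≠ [] := by
    intro b hb
    have := hθ.2 [b]
    rw [hb, aux_nil hθ] at this
    exact absurd this (by simp)
  rcases hw : θ [a] with _ | ⟨b, w'⟩
  · exact absurd hw (hne a)
  · have h2 : θ (b :: w') = [a] := by rw [← hw, hθ.2]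
    have h3 : θ ([b] ++ w') = θ w' ++ θ [b] := hθ.1 [b] w'
    simp at h3
    rw [h3] at h2
    have hlen := congrArg List.length h2
    simp at hlen
    have hbne : θ [b] ≠ [] := hne b
    have hbl : 1 ≤ (θ [b]).length := by
      cases hθb : θ [b] with
      | nil => exact absurd hθb hbne
      | cons c l => simp
    have hw' : (θ w').length = 0 := by omega
    have hw'nil : θ w' = [] := List.eq_nil_of_length_eq_zero hw'
    have : w' = [] := by
      have := hθ.2 w'
      rw [hw'nil, aux_nil hθ] at this
      exact this.symm
    simp [this]

lemma aux_len {θ : List α → List α} (hθ : IsAntimorphicInvolution θ) (l : List α) :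
    (θ l).length = l.length := by
  induction l with
  | nil => simp [aux_nil hθ]
  | cons a l ih =>
    have : θ (a :: l) = θ l ++ θ [a] := by
      have := hθ.1 [a] l
      simpa using this
    rw [this]
    simp [ih, aux_single hθ a]

lemma listPow_succ (z : List α) (n : ℕ) : listPow z (n + 1) = z ++ listPow z n := by
  simp [listPow, List.replicate_succ]

lemma listPow_succ' (z : List α) (n : ℕ) : listPow z (n + 1) = listPow z n ++ z := by
  simp [listPow, List.replicate_succ']

lemma aux_theta_pow {θ : List α → List α} (hθ : IsAntimorphicInvolution θ) (z : List α) :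
    ∀ n, θ (listPow z n) = listPow (θ z) n := by
  intro n
  induction n with
  | zero => simp [listPow, aux_nil hθ]
  | succ n ih =>
    rw [listPow_succ, hθ.1, ih, listPow_succ']

lemma aux_shift (x y : List α) : ∀ i, x ++ listPow (y ++ x) i = listPow (x ++ y) i ++ x := by
  intro i
  induction i with
  | zero => simp [listPow]
  | succ i ih =>
    rw [listPow_succ, listPow_succ (x ++ y)]
    simp only [← List.append_assoc]
    rw [List.append_assoc (x ++ y), ih]
    simp

lemma aux_pal {θ : List α → List α} (hθ : IsAntimorphicInvolution θ) {x y : List α}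
    (hx : θ x = x) (hy : θ y = y) (i : ℕ) :
    θ (x ++ listPow (y ++ x) i) = x ++ listPow (y ++ x) i := by
  rw [aux_shift, hθ.1, hx, aux_theta_pow hθ, hθ.1, hx, hy]
  rw [aux_shift]

lemma aux_main {θ : List α → List α} (hθ : IsAntimorphicInvolution θ) :
    ∀ n (u v : List α), u.length = n → u ≠ [] → v ≠ [] → u ++ v = θ v ++ u →
    ∃ (x y : List α) (i : ℕ), θ x = x ∧ θ y = y ∧ y ≠ [] ∧
      u = x ++ listPow (y ++ x) i ∧ v = y ++ x := by
  intro n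
  induction n using Nat.strong_induction_on with
  | _ n ih =>
  intro u v hn hu hv h
  have hlv : (θ v).length = v.length := aux_len hθ v
  rcases lt_trichotomy u.length v.length with hlt | heq | hgt
  · -- |u| < |v| : θ v = u ++ t, v = t ++ u
    have hup : u = (θ v).take u.length := by
      have hc := congrArg (List.take u.length) h
      rw [List.take_left] at hc
      rw [List.take_append_of_le_length (by omega)] at hc
      exact hc
    set t := (θ v).drop u.length with ht
    have htv : θ v = u ++ t := by
      conv_lhs => rw [← List.take_append_drop u.length (θ v)]
      rw [← hup]
    have htne : t ≠ [] := by
      have : t.length = v.length - u.length := by simp [ht, hlv]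
      intro hh
      rw [hh] at this
      simp at this
      omega
    have hvtu : v = t ++ u := by
      have h2 : u ++ v = u ++ (t ++ u) := by
        rw [h, htv, List.append_assoc]
      exact List.append_cancel_left h2
    have hth : u ++ t = θ u ++ θ t := by
      rw [← htv, hvtu, hθ.1]
    have hinj := List.append_inj hth.symm (by rw [aux_len hθ])
    exact ⟨u, t, 0, hinj.1, hinj.2, htne, by simp [listPow], hvtu⟩
  · -- |u| = |v|
    have hinj := List.append_inj h (by omega)
    have huv : v = u := hinj.2
    have hθu : θ u = u := by
      have h1 := hinj.1
      rw [huv] at h1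
      exact h1.symm
    refine ⟨[], u, 1, aux_nil hθ, hθu, hu, ?_, by simp [huv]⟩
    simp [listPow]
  · -- |u| > |v| : u = θ v ++ w, recurse
    have hup : u.take v.length = θ v := by
      have hc := congrArg (List.take (θ v).length) h
      rw [List.take_left] at hc
      rw [List.take_append_of_le_length (by omega)] at hc
      rw [hlv] at hc
      exact hc
    set w := u.drop v.length with hwdef
    have huw : u = θ v ++ w := by
      conv_lhs => rw [← List.take_append_drop v.length u]
      rw [hup]
    have hwne : w ≠ [] := by
      have : w.length = u.length - v.length := by simp [hwdef]
      intro hh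
      rw [hh] at this
      simp at this
      omega
    have hwv : w ++ v = θ v ++ w := by
      have h2 : θ v ++ (w ++ v) = θ v ++ (θ v ++ w) := by
        rw [← List.append_assoc, ← huw, h, huw]
      exact List.append_cancel_left h2
    have hvpos : 0 < v.length := List.length_pos_iff.mpr hv
    have hwlt : w.length < n := by
      have : w.length = u.length - v.length := by simp [hwdef]
      omega
    obtain ⟨x, y, i, hx, hy, hyne, hw, hveq⟩ := ih w.length hwlt w v rfl hwne hv hwv
    refine ⟨x, y, i + 1, hx, hy, hyne, ?_, hveq⟩
    rw [huw, hw, hveq, hθ.1, hx, hy, listPow_succ]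
    simp

theorem stmt7 (θ : List α → List α) (hθ : IsAntimorphicInvolution θ)
    (u v : List α) (hu : u ≠ []) (hv : v ≠ []) (h : u ++ v = θ v ++ u) :
    (∃ (x y : List α) (i : ℕ), θ x = x ∧ θ y = y ∧ y ≠ [] ∧
      u = x ++ listPow (y ++ x) i ∧ v = y ++ x) ∧ θ u = u := by
  obtain ⟨x, y, i, hx, hy, hyne, hue, hve⟩ :=
    aux_main hθ u.length u v rfl hu hv h
  refine ⟨⟨x, y, i, hx, hy, hyne, hue, hve⟩, ?_⟩
  rw [hue]
  exact aux_pal hθ hx hy i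
end

section
/- Let θ be an antimorphic involution. The conjugacy class of any word contains at most two θ-palindromes. -/
variable {α : Type*}

section Aux

variable {θ : List α → List α}

lemma theta_nil (hθ : IsAntimorphicInvolution θ) : θ ([] : List α) = [] := by
  have h := hθ.1 [] []
  simp only [List.append_nil] at h
  have hl := congrArg List.length h
  simp at hl
  exact hl

lemma theta_ne_nil (hθ : IsAntimorphicInvolution θ) {u : List α} (hu : u ≠ []) : θ u ≠ [] := by
  intro h
  apply hu
  have := congrArg θ h
  rwa [hθ.2, theta_nil hθ] at this

lemma theta_single (hθ : IsAntimorphicInvolution θ) (a : α) : (θ [a]).length = 1 := by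
  rcases h : θ [a] with _ | ⟨b, _ | ⟨c, t⟩⟩
  · exfalso; exact theta_ne_nil hθ (by simp) h
  · simp
  · exfalso
    have h2 : [a] = θ (c :: t) ++ θ [b] := by
      have := hθ.1 [b] (c :: t)
      rw [← this]
      simp only [List.singleton_append]
      rw [← h, hθ.2]
    have h3 := congrArg List.length h2
    simp only [List.length_append, List.length_cons, List.length_nil] at h3
    have p1 : θ (c :: t) ≠ [] := theta_ne_nil hθ (by simp)
    have p2 : θ [b] ≠ [] := theta_ne_nil hθ (by simp)
    have l1 := List.length_pos_iff.mpr p1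
    have l2 := List.length_pos_iff.mpr p2
    omega

lemma theta_length (hθ : IsAntimorphicInvolution θ) (u : List α) : (θ u).length = u.length := by
  induction u with
  | nil => simp [theta_nil hθ]
  | cons a u ih =>
    have : θ (a :: u) = θ u ++ θ [a] := by
      have := hθ.1 [a] u
      simpa using this
    rw [this]
    simp [ih, theta_single hθ a]

/-- If p is a θ-palindrome, θ maps the rotation by i to the rotation by length - i. -/
lemma theta_rotate (hθ : IsAntimorphicInvolution θ) {p : List α} (hp : θ p = p)
    {i : ℕ} (hi : i ≤ p.length) : θ (p.rotate i) = p.rotate (p.length - i) := by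
  have h1 : p.rotate i = p.drop i ++ p.take i := List.rotate_eq_drop_append_take hi
  have h2 : θ (p.rotate i) = θ (p.take i) ++ θ (p.drop i) := by rw [h1, hθ.1]
  have h3 : p = θ (p.drop i) ++ θ (p.take i) := by
    conv_lhs => rw [← hp]
    conv_lhs => rw [← List.take_append_drop i p]
    rw [hθ.1]
  have hlen : (θ (p.drop i)).length = p.length - i := by
    rw [theta_length hθ]; simp
  have h4 : p.rotate (p.length - i) = p.drop (p.length - i) ++ p.take (p.length - i) :=
    List.rotate_eq_drop_append_take (by omega)
  have h5 : p.take (p.length - i) = θ (p.drop i) := by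
    have h7 := List.take_left' (l₂ := θ (p.take i)) hlen
    rw [← h3] at h7; exact h7
  have h6 : p.drop (p.length - i) = θ (p.take i) := by
    have h7 := List.drop_left' (l₂ := θ (p.take i)) hlen
    rw [← h3] at h7; exact h7
  rw [h2, h4, h5, h6]

lemma rot_append (u v : List α) : (u ++ v).rotate u.length = v ++ u := by
  rw [List.rotate_eq_drop_append_take (by simp), List.drop_left, List.take_left]

lemma conj_rotate {w x : List α} (hx : x ∈ conjClass w) : ∃ s, x.rotate s = w := by
  obtain ⟨u, v, hw, hxe⟩ := hx
  exact ⟨v.length, by rw [hxe, rot_append, hw]⟩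

lemma rotate_mul {p : List α} {d : ℕ} (hd : p.rotate d = p) (k : ℕ) :
    p.rotate (d * k) = p := by
  induction k with
  | zero => simp
  | succ k ih =>
    have : d * (k + 1) = d * k + d := by ring
    rw [this, ← List.rotate_rotate, ih, hd]

lemma rotate_congr {p : List α} {d a b : ℕ} (hd : p.rotate d = p) (hab : b ≤ a)
    (hdvd : d ∣ a - b) : p.rotate a = p.rotate b := by
  obtain ⟨k, hk⟩ := hdvd
  have : a = d * k + b := by omega
  rw [this, ← List.rotate_rotate, rotate_mul hd k]

end Aux

theorem stmt11 (θ : List α → List α) (hθ : IsAntimorphicInvolution θ) (w : List α) :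
    {p | p ∈ conjClass w ∧ θ p = p}.ncard ≤ 2 := by
  classical
  set S := {p | p ∈ conjClass w ∧ θ p = p} with hS
  by_cases hne : S = ∅
  · simp [hne]
  obtain ⟨p, hpS⟩ := Set.nonempty_iff_ne_empty.mpr hne
  obtain ⟨hpc, hpp⟩ := hpS
  by_cases hpnil : p = []
  · -- then w = [] and S ⊆ {[]}
    have hwnil : w = [] := by
      obtain ⟨u, v, hw, hpe⟩ := hpc
      rw [hpnil] at hpe
      have : v = [] ∧ u = [] := by
        constructor <;> [exact List.eq_nil_of_length_eq_zero (by
          have := congrArg List.length hpe; simp at this; omega);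
          exact List.eq_nil_of_length_eq_zero (by
          have := congrArg List.length hpe; simp at this; omega)]
      rw [hw, this.1, this.2]; simp
    have hsub : S ⊆ {[]} := by
      rintro q ⟨⟨u, v, hw, hq⟩, -⟩
      rw [hwnil] at hw
      have hu : u = [] := by
        have := congrArg List.length hw; simp at this
        exact List.eq_nil_of_length_eq_zero (by omega)
      have hv : v = [] := by
        have := congrArg List.length hw; simp at this
        exact List.eq_nil_of_length_eq_zero (by omega)
      simp [hq, hu, hv]
    calc S.ncard ≤ ({[]} : Set (List α)).ncard :=
          Set.ncard_le_ncard hsub (Set.finite_singleton _)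
      _ = 1 := Set.ncard_singleton _
      _ ≤ 2 := by omega
  -- main case
  set n := p.length with hn
  have hnpos : 0 < n := List.length_pos_iff.mpr hpnil
  -- the least positive rotation period d
  have hex : ∃ m, 0 < m ∧ p.rotate m = p := ⟨n, hnpos, List.rotate_length p⟩
  set d := Nat.find hex with hd
  obtain ⟨hdpos, hdrot⟩ : 0 < d ∧ p.rotate d = p := Nat.find_spec hex
  -- every palindrome in the class is p.rotate a with p.rotate (2a) = p
  have key : ∀ q ∈ S, ∃ a, a < n ∧ p.rotate a = q ∧ p.rotate (2 * a) = p := by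
    rintro q ⟨hqc, hqp⟩
    obtain ⟨s, hs⟩ := conj_rotate hpc
    obtain ⟨t, ht⟩ := conj_rotate hqc
    -- w.rotate ? = q : invert ht. q.rotate t = w, w.rotate (|q| - t % |q|) = q... instead:
    -- p.rotate s = w and q.rotate t = w. lengths equal.
    have hlpq : q.length = p.length := by
      have h1 := congrArg List.length hs
      have h2 := congrArg List.length ht
      simp at h1 h2; omega
    -- q = w.rotate (|q| - t % |q|)
    have hqt : w.rotate (q.length - t % q.length) = q := by
      have h1 : q.rotate (t % q.length) = w := by rw [List.rotate_mod]; exact ht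
      have h2 : t % q.length ≤ q.length := le_of_lt (Nat.mod_lt _ (by omega))
      rw [← h1, List.rotate_rotate]
      have : t % q.length + (q.length - t % q.length) = q.length := by omega
      rw [this, List.rotate_length]
    -- so q = p.rotate (s + (…)), reduce mod n
    have hpq : p.rotate ((s + (q.length - t % q.length)) % n) = q := by
      rw [List.rotate_mod, ← List.rotate_rotate, hs, hqt]
    set a := (s + (q.length - t % q.length)) % n with ha
    have han : a < n := Nat.mod_lt _ hnpos
    refine ⟨a, han, hpq, ?_⟩
    -- θ q = q gives p.rotate (n - a) = p.rotate a
    have h1 : θ (p.rotate a) = p.rotate (n - a) := theta_rotate hθ hpp (le_of_lt han)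
    have h2 : p.rotate (n - a) = p.rotate a := by rw [← h1, hpq, hqp, ← hpq]
    have h3 : (p.rotate (n - a)).rotate a = (p.rotate a).rotate a := by rw [h2]
    rw [List.rotate_rotate, List.rotate_rotate] at h3
    have : n - a + a = n := by omega
    rw [this, List.rotate_length] at h3
    rw [two_mul, ← h3]
  -- S ⊆ {p, p.rotate (d / 2)}
  have hsub : S ⊆ {p, p.rotate (d / 2)} := by
    intro q hq
    obtain ⟨a, han, hrot, h2a⟩ := key q hq
    have hdvd2a : d ∣ 2 * a := by
      rcases Nat.eq_zero_or_pos (2 * a) with h | h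
      · simp [h]
      have : (2 * a) % d = 0 := by
        by_contra hmod
        have hrm : p.rotate ((2 * a) % d) = p := by
          have hsplit : 2 * a = d * (2 * a / d) + (2 * a) % d := (Nat.div_add_mod _ _).symm
          have := rotate_mul hdrot (2 * a / d)
          calc p.rotate ((2 * a) % d) = (p.rotate (d * (2 * a / d))).rotate ((2 * a) % d) := by
                rw [this]
            _ = p.rotate (2 * a) := by rw [List.rotate_rotate, ← hsplit]
            _ = p := h2a
        have hlt : (2 * a) % d < d := Nat.mod_lt _ hdpos
        exact Nat.find_min hex hlt ⟨Nat.pos_of_ne_zero hmod, hrm⟩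
      exact Nat.dvd_of_mod_eq_zero this
    by_cases hda : d ∣ a
    · left
      have : p.rotate a = p.rotate 0 := rotate_congr hdrot (Nat.zero_le a) (by simpa using hda)
      rw [← hrot, this, List.rotate_zero]
    · right
      -- a % d = d / 2 with 2 * (a % d) = d
      have hmodlt : a % d < d := Nat.mod_lt _ hdpos
      have hdvdr : d ∣ 2 * (a % d) := by
        have hsplit : a = d * (a / d) + a % d := (Nat.div_add_mod _ _).symm
        have h1 : d ∣ 2 * (d * (a / d)) := ⟨2 * (a / d), by ring⟩
        have h2 : 2 * (a % d) = 2 * a - 2 * (d * (a / d)) := by omega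
        rw [h2]
        exact Nat.dvd_sub hdvd2a h1
      obtain ⟨k, hk⟩ := hdvdr
      have hklt : k < 2 := by
        have : d * k < d * 2 := by omega
        exact Nat.lt_of_mul_lt_mul_left this
      interval_cases k
      · exfalso
        apply hda
        exact Nat.dvd_of_mod_eq_zero (by omega)
      · -- 2 * (a % d) = d, so a % d = d / 2
        have hhalf : a % d = d / 2 := by omega
        have : p.rotate a = p.rotate (a % d) := by
          apply rotate_congr hdrot (Nat.mod_le _ _)
          exact ⟨a / d, by have := Nat.div_add_mod a d; omega⟩
        rw [← hrot, this, hhalf]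
        exact rfl
  calc S.ncard ≤ ({p, p.rotate (d / 2)} : Set (List α)).ncard :=
        Set.ncard_le_ncard hsub ((Set.finite_singleton _).insert _)
    _ ≤ 2 := by
        have h1 := Set.ncard_insert_le p ({p.rotate (d / 2)} : Set (List α))
        rw [Set.ncard_singleton] at h1
        omega
end
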